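/- Suppose h is hyperbolic with respect to e, q is hyperbolic with respect to e with Λ(h,e) ⊆ Λ(q,e), and q·h = det(∑xᵢAᵢ) with A₁,…,Aₙ real symmetric and A(e) ≻ 0. Then Λ(h,e) = Λ(h,e) ∩ Λ(q,e) = {v ∈ ℝⁿ : ∑vᵢAᵢ ⪰ 0}, so Λ(h,e) is a spectrahedral cone. -/

import Mathlib

open MvPolynomial Polynomial Matrix

noncomputable def univPoly {n : ℕ} (h : MvPolynomial (Fin n) ℝ) (e v : Fin n → ℝ) : Polynomial ℝ :=
  MvPolynomial.aeval (fun i => Polynomial.C (v i) + Polynomial.C (e i) * Polynomial.X) h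

def RealRooted (p : Polynomial ℝ) : Prop :=
  ∀ z : ℂ, (p.map (algebraMap ℝ ℂ)).IsRoot z → z.im = 0

def Hyperbolic {n : ℕ} (h : MvPolynomial (Fin n) ℝ) (e : Fin n → ℝ) : Prop :=
  MvPolynomial.eval e h ≠ 0 ∧ ∀ v : Fin n → ℝ, RealRooted (univPoly h e v)

def hypCone {n : ℕ} (h : MvPolynomial (Fin n) ℝ) (e : Fin n → ℝ) : Set (Fin n → ℝ) :=
  {v | ∀ t : ℝ, (univPoly h e v).IsRoot t → t ≤ 0}

noncomputable def matPoly {n m : ℕ} (A : Fin n → Matrix (Fin m) (Fin m) ℝ) :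
    Matrix (Fin m) (Fin m) (MvPolynomial (Fin n) ℝ) :=
  fun j k => ∑ i, MvPolynomial.C (A i j k) * MvPolynomial.X i

/-! ### Auxiliary lemmas -/

lemma aux_isSymm_isHermitian {m : ℕ} {M : Matrix (Fin m) (Fin m) ℝ} (hM : M.IsSymm) :
    M.IsHermitian := by
  rw [Matrix.IsHermitian, conjTranspose]
  convert hM.eq using 1; ext i j; simp

lemma aux_smul_posDef {m : ℕ} {E : Matrix (Fin m) (Fin m) ℝ} (hE : E.PosDef) {t : ℝ}
    (ht : 0 < t) : (t • E).PosDef := by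
  refine ⟨?_, fun x hx => ?_⟩
  · unfold Matrix.IsHermitian
    rw [conjTranspose_smul, hE.1.eq]
    simp
  · exact (hE.smul ht).2 hx

open scoped MatrixOrder in
/-- For a real symmetric `V` and positive definite `E`, all real roots of
`t ↦ det (V + t E)` are nonpositive iff `V` is positive semidefinite. -/
lemma aux_det_root_iff_psd {m : ℕ} {V E : Matrix (Fin m) (Fin m) ℝ}
    (hV : V.IsHermitian) (hE : E.PosDef) :
    (∀ t : ℝ, (V + t • E).det = 0 → t ≤ 0) ↔ V.PosSemidef := by
  constructor
  · intro H
    have hEp := hE.posSemidef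
    set S := CFC.sqrt E with hSdef
    have hSS : S * S = E := CFC.sqrt_mul_sqrt_self E hEp.nonneg
    have hSH : S.IsHermitian := (CFC.sqrt_nonneg E).posSemidef.1
    have hdS : S.det ≠ 0 := by
      intro h0
      have := hE.det_pos
      rw [← hSS, det_mul, h0, mul_zero] at this
      exact lt_irrefl _ this
    have hSi : S⁻¹ * S = 1 := nonsing_inv_mul S hdS.isUnit
    have hSi' : S * S⁻¹ = 1 := mul_nonsing_inv S hdS.isUnit
    set M := S⁻¹ * V * S⁻¹ with hM
    have hMH : M.IsHermitian := by
      rw [Matrix.IsHermitian, hM, conjTranspose_mul, conjTranspose_mul, hSH.inv.eq, hV.eq,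
        mul_assoc]
    have h1 : S * M * S = V := by
      rw [hM, show S⁻¹ * V * S⁻¹ = S⁻¹ * (V * S⁻¹) from mul_assoc _ _ _,
        ← mul_assoc S S⁻¹ _, hSi', one_mul, mul_assoc, hSi, mul_one]
    have hdet : ∀ t : ℝ, (V + t • E).det = S.det * (M + t • 1).det * S.det := by
      intro t
      have hconj : V + t • E = S * (M + t • 1) * S := by
        rw [Matrix.mul_add, Matrix.add_mul, h1]
        congr 1
        rw [Matrix.mul_smul, Matrix.smul_mul, Matrix.mul_one, hSS]
      rw [hconj, det_mul, det_mul]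
    have heig : ∀ i, 0 ≤ hMH.eigenvalues i := by
      intro i
      by_contra hlt
      push_neg at hlt
      set μ := hMH.eigenvalues i with hμ
      have hw := hMH.mulVec_eigenvectorBasis i
      have hwne : ⇑(hMH.eigenvectorBasis i) ≠ 0 := by
        have h2 := hMH.eigenvectorBasis.orthonormal.ne_zero i
        intro hcon
        apply h2
        ext j
        exact congrFun hcon j
      have hdet0 : (M + (-μ) • 1).det = 0 := by
        rw [← Matrix.exists_mulVec_eq_zero_iff]
        refine ⟨_, hwne, ?_⟩
        rw [add_mulVec, smul_mulVec, one_mulVec, hw, neg_smul, add_neg_cancel]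
      have hle := H (-μ) (by rw [hdet (-μ), hdet0, mul_zero, zero_mul])
      linarith
    have hMpsd := hMH.posSemidef_iff_eigenvalues_nonneg.mpr heig
    have h2 := hMpsd.mul_mul_conjTranspose_same S
    rw [hSH.eq, h1] at h2
    exact h2
  · intro hVp t h0
    by_contra ht
    push_neg at ht
    have : (V + t • E).PosDef := Matrix.PosDef.posSemidef_add hVp (aux_smul_posDef hE ht)
    exact this.det_pos.ne' h0

lemma aux_eval_univPoly {n : ℕ} (p : MvPolynomial (Fin n) ℝ) (e v : Fin n → ℝ) (t : ℝ) :
    (univPoly p e v).eval t = MvPolynomial.eval (fun i => v i + e i * t) p := by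
  have h2 : ((Polynomial.evalRingHom t).comp (algebraMap ℝ (Polynomial ℝ))) = RingHom.id ℝ := by
    ext r; simp
  have h3 : (⇑(Polynomial.evalRingHom t)) ∘
      (fun i => Polynomial.C (v i) + Polynomial.C (e i) * Polynomial.X) =
      fun i => v i + e i * t := by
    ext i; simp
  rw [univPoly, MvPolynomial.aeval_def, ← Polynomial.coe_evalRingHom,
    MvPolynomial.eval₂_comp_left (Polynomial.evalRingHom t), h2, h3]
  rfl

lemma aux_hypCone_mul {n : ℕ} (p r : MvPolynomial (Fin n) ℝ) (e : Fin n → ℝ) :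
    hypCone (p * r) e = hypCone p e ∩ hypCone r e := by
  ext v
  have hmul : univPoly (p * r) e v = univPoly p e v * univPoly r e v := map_mul _ _ _
  simp only [hypCone, Set.mem_setOf_eq, Set.mem_inter_iff, hmul, Polynomial.IsRoot,
    Polynomial.eval_mul, mul_eq_zero]
  constructor
  · exact fun H => ⟨fun t ht => H t (Or.inl ht), fun t ht => H t (Or.inr ht)⟩
  · rintro ⟨H1, H2⟩ t (ht | ht)
    · exact H1 t ht
    · exact H2 t ht

lemma aux_eval_matPoly_det {n m : ℕ} (A : Fin n → Matrix (Fin m) (Fin m) ℝ) (w : Fin n → ℝ) :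
    MvPolynomial.eval w (matPoly A).det = (∑ i, w i • A i).det := by
  rw [RingHom.map_det]
  congr 1
  ext j k
  simp [matPoly, Matrix.sum_apply, mul_comm]

lemma aux_sum_split {n m : ℕ} (A : Fin n → Matrix (Fin m) (Fin m) ℝ) (e v : Fin n → ℝ) (t : ℝ) :
    ∑ i, (v i + e i * t) • A i = (∑ i, v i • A i) + t • ∑ i, e i • A i := by
  rw [Finset.smul_sum, ← Finset.sum_add_distrib]
  congr 1
  ext i : 1
  rw [add_smul, smul_smul, mul_comm t]

theorem stmt18 {n m : ℕ} (h q : MvPolynomial (Fin n) ℝ) (e : Fin n → ℝ)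
    {dq dh : ℕ} (hqhom : q.IsHomogeneous dq) (hhhom : h.IsHomogeneous dh)
    (hh : Hyperbolic h e) (hq : Hyperbolic q e)
    (hsub : hypCone h e ⊆ hypCone q e)
    (A : Fin n → Matrix (Fin m) (Fin m) ℝ) (hsymm : ∀ i, (A i).IsSymm)
    (hdet : (matPoly A).det = q * h)
    (hpd : (∑ i, e i • A i).PosDef) :
    hypCone h e = hypCone h e ∩ hypCone q e ∧
      hypCone h e = {v : Fin n → ℝ | (∑ i, v i • A i).PosSemidef} := by
  refine ⟨Set.left_eq_inter.mpr hsub, ?_⟩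
  have hkey : hypCone (q * h) e = hypCone h e := by
    rw [aux_hypCone_mul]
    exact Set.inter_eq_right.mpr hsub
  rw [← hkey]
  ext v
  have hVH : (∑ i, v i • A i).IsHermitian := by
    apply aux_isSymm_isHermitian
    rw [Matrix.IsSymm, Matrix.transpose_sum]
    refine Finset.sum_congr rfl fun i _ => ?_
    rw [Matrix.transpose_smul, (hsymm i).eq]
  have hroot : ∀ t : ℝ, (univPoly (q * h) e v).IsRoot t ↔
      ((∑ i, v i • A i) + t • ∑ i, e i • A i).det = 0 := by
    intro t
    rw [Polynomial.IsRoot, aux_eval_univPoly, ← hdet, aux_eval_matPoly_det, aux_sum_split]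
  simp only [hypCone, Set.mem_setOf_eq]
  constructor
  · intro H
    exact (aux_det_root_iff_psd hVH hpd).1 fun t h0 => H t ((hroot t).2 h0)
  · intro H t ht
    exact (aux_det_root_iff_psd hVH hpd).2 H t ((hroot t).1 ht)
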